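/- Let M = ⊕_{d≥0} M_d be a finitely generated ℕ-graded module over ℂ[x,y] (with x and y of degree 1), equipped with two ℂ-linear operators D_x, D_y : M → M of degree −1 such that D_x D_y = D_y D_x and, for all f ∈ ℂ[x,y] and m ∈ M, D_x(f·m) = (∂f/∂x)·m + f·D_x(m) and D_y(f·m) = (∂f/∂y)·m + f·D_y(m). Set M̄ = ker(D_x) ∩ ker(D_y). Then the multiplication map M̄ ⊗_ℂ ℂ[x,y] → M is an isomorphism of ℂ[x,y]-modules; in particular M is a free ℂ[x,y]-module and M̄ is a finite-dimensional ℂ-vector space. -/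

import Mathlib

open MvPolynomial TensorProduct

/-- The polynomial ring `ℂ[x,y]`, with `x = X 0`, `y = X 1`. -/
abbrev P2 : Type := MvPolynomial (Fin 2) ℂ

/-- The multiplication map `ℂ[x,y] ⊗_ℂ K → M`, `f ⊗ m ↦ f·m`, for a `ℂ`-subspace `K`
of a `ℂ[x,y]`-module `M`. -/
noncomputable def mulMap (M : Type*) [AddCommGroup M] [Module ℂ M] [Module P2 M]
    [IsScalarTower ℂ P2 M] (K : Submodule ℂ M) : P2 ⊗[ℂ] K →ₗ[P2] M :=
  LinearMap.liftBaseChange P2 K.subtype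


open Finset
set_option linter.unusedSectionVars false
set_option synthInstance.maxHeartbeats 1000000
set_option maxHeartbeats 1000000

section
variable {M : Type} [AddCommGroup M] [Module ℂ M] [Module P2 M] [IsScalarTower ℂ P2 M]

lemma nat_mul_smul (k : ℕ) (q : P2) (w : M) : (((k:ℕ):P2) * q) • w = ((k:ℕ):ℂ) • (q • w) := by
  rw [mul_smul, Nat.cast_smul_eq_nsmul, Nat.cast_smul_eq_nsmul]

lemma coefstep (i j : ℕ) : ((-1:ℂ)^((i+1)+j) / ((i+1).factorial * j.factorial)) * ((i+1:ℕ):ℂ) = -((-1:ℂ)^(i+j)/(i.factorial * j.factorial)) := by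
  have h1 : ((i.factorial :ℂ)) ≠ 0 := Nat.cast_ne_zero.mpr (Nat.factorial_ne_zero _)
  have h2 : ((j.factorial :ℂ)) ≠ 0 := Nat.cast_ne_zero.mpr (Nat.factorial_ne_zero _)
  have h3 : ((i:ℂ)+1) ≠ 0 := Nat.cast_add_one_ne_zero i
  rw [Nat.factorial_succ]; push_cast; field_simp; ring

lemma pderiv0_pow (i j : ℕ) : pderiv (0 : Fin 2) ((X 0:P2)^(i+1) * X 1^j) = ((i+1 : ℕ) : P2) * (X 0^i * X 1^j) := by
  simp [pderiv_mul, pderiv_pow, pderiv_X_self, pderiv_X_of_ne (by decide : (1:Fin 2) ≠ 0)]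
  ring

lemma pderiv1_pow (i j : ℕ) : pderiv (1 : Fin 2) ((X 0:P2)^i * X 1^(j+1)) = ((j+1 : ℕ) : P2) * (X 0^i * X 1^j) := by
  simp [pderiv_mul, pderiv_pow, pderiv_X_self, pderiv_X_of_ne (by decide : (0:Fin 2) ≠ 1)]
  ring

lemma pderiv0_pow0 (j : ℕ) : pderiv (0 : Fin 2) ((X 0:P2)^0 * X 1^j) = 0 := by
  simp [pderiv_mul, pderiv_pow, pderiv_X_of_ne (by decide : (1:Fin 2) ≠ 0)]

lemma pderiv1_pow0 (i : ℕ) : pderiv (1 : Fin 2) ((X 0:P2)^i * X 1^0) = 0 := by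
  simp [pderiv_mul, pderiv_pow, pderiv_X_of_ne (by decide : (0:Fin 2) ≠ 1)]

noncomputable def muL (f : P2) : M →ₗ[ℂ] M := (LinearMap.lsmul P2 M f).restrictScalars ℂ

@[simp] lemma muL_apply (f : P2) (m : M) : muL f m = f • m := rfl

noncomputable def TT (Dx Dy : M →ₗ[ℂ] M) (N : ℕ) : M →ₗ[ℂ] M :=
  ∑ i ∈ range N, ∑ j ∈ range N,
    ((-1:ℂ)^(i+j) / (i.factorial * j.factorial)) •
      ((muL (X 0 ^ i * X 1 ^ j)) ∘ₗ ((Dx^i : M →ₗ[ℂ] M) ∘ₗ (Dy^j : M →ₗ[ℂ] M)))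

lemma TT_apply (Dx Dy : M →ₗ[ℂ] M) (N : ℕ) (m : M) :
    TT Dx Dy N m = ∑ i ∈ range N, ∑ j ∈ range N,
      ((-1:ℂ)^(i+j) / (i.factorial * j.factorial)) •
        ((X 0 ^ i * X 1 ^ j : P2) • ((Dx^i) ((Dy^j) m))) := by
  simp [TT, LinearMap.sum_apply]

lemma TT_ker_x (Dx Dy : M →ₗ[ℂ] M)
    (hLx : ∀ (f : P2) (m : M), Dx (f • m) = (pderiv 0 f) • m + f • Dx m)
    (N : ℕ) (m : M) (hnil : ∀ j, (Dx^N) ((Dy^j) m) = 0) :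
    Dx (TT Dx Dy N m) = 0 := by
  rw [TT_apply, map_sum]
  simp only [map_sum]
  rw [Finset.sum_comm]
  refine Finset.sum_eq_zero (fun j hj => ?_)
  set v : ℕ → M := fun i => ((-1:ℂ)^(i+j)/(i.factorial * j.factorial)) •
      ((X 0^i * X 1^j : P2) • ((Dx^(i+1)) ((Dy^j) m))) with hv
  set f : ℕ → M := fun i => match i with | 0 => 0 | (k+1) => v k with hf
  have hpow : ∀ i, Dx ((Dx^i) ((Dy^j) m)) = (Dx^(i+1)) ((Dy^j) m) := by
    intro i; rw [pow_succ', Module.End.mul_apply]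
  have hstep : ∀ i, Dx (((-1:ℂ)^(i+j) / (i.factorial * j.factorial)) •
      ((X 0 ^ i * X 1 ^ j : P2) • ((Dx^i) ((Dy^j) m)))) = f (i+1) - f i := by
    intro i
    rw [map_smul, hLx, smul_add]
    cases i with
    | zero =>
      show _ = v 0 - 0
      rw [pderiv0_pow0, zero_smul, smul_zero, zero_add, sub_zero, hv]
      simp [Module.End.one_apply]
    | succ i =>
      show _ = v (i+1) - v i
      rw [pderiv0_pow, nat_mul_smul, smul_smul, coefstep, hpow, sub_eq_neg_add, hv]
      simp [neg_smul]
  calc ∑ i ∈ range N, Dx (((-1:ℂ)^(i+j) / (i.factorial * j.factorial)) •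
        ((X 0 ^ i * X 1 ^ j : P2) • ((Dx^i) ((Dy^j) m))))
      = ∑ i ∈ range N, (f (i+1) - f i) := Finset.sum_congr rfl (fun i _ => hstep i)
    _ = f N - f 0 := Finset.sum_range_sub f N
    _ = 0 := by
        cases N with
        | zero => simp
        | succ N => show v N - 0 = 0; rw [hv]; simp [hnil]

lemma coefstep' (i j : ℕ) : ((-1:ℂ)^(i+(j+1)) / (i.factorial * (j+1).factorial)) * ((j+1:ℕ):ℂ) = -((-1:ℂ)^(i+j)/(i.factorial * j.factorial)) := by
  have := coefstep j i
  calc ((-1:ℂ)^(i+(j+1)) / (i.factorial * (j+1).factorial)) * ((j+1:ℕ):ℂ)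
      = ((-1:ℂ)^((j+1)+i) / ((j+1).factorial * i.factorial)) * ((j+1:ℕ):ℂ) := by ring_nf
    _ = -((-1:ℂ)^(j+i)/(j.factorial * i.factorial)) := this
    _ = -((-1:ℂ)^(i+j)/(i.factorial * j.factorial)) := by ring_nf

lemma powMem (g : ℕ → Submodule ℂ M) (D : M →ₗ[ℂ] M) (hdeg : ∀ d : ℕ, ∀ m ∈ g (d + 1), D m ∈ g d) :
    ∀ (k d : ℕ), ∀ m ∈ g (d + k), (D^k) m ∈ g d := by
  intro k
  induction k with
  | zero => intro d m hm; simpa using hm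
  | succ k ih =>
    intro d m hm
    have : (D^(k+1)) m = (D^k) (D m) := by rw [pow_succ, Module.End.mul_apply]
    rw [this]
    exact ih d (D m) (hdeg (d + k) m (by simpa [Nat.add_assoc] using hm))

lemma powEqZero (g : ℕ → Submodule ℂ M) (D : M →ₗ[ℂ] M) (hdeg : ∀ d : ℕ, ∀ m ∈ g (d + 1), D m ∈ g d)
    (h0 : ∀ m ∈ g 0, D m = 0) :
    ∀ (k d : ℕ), d < k → ∀ m ∈ g d, (D^k) m = 0 := by
  intro k d hdk m hm
  obtain ⟨j, rfl⟩ : ∃ j, k = (d + 1) + j := ⟨k - (d+1), by omega⟩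
  have h1 : (D^d) m ∈ g 0 := powMem g D hdeg d 0 m (by simpa using hm)
  have h2 : (D^(d+1)) m = 0 := by
    rw [pow_succ', Module.End.mul_apply]; exact h0 _ h1
  calc (D^(d+1+j)) m = (D^j) ((D^(d+1)) m) := by rw [add_comm, pow_add, Module.End.mul_apply]
  _ = 0 := by rw [h2, map_zero]

lemma nilDD (g : ℕ → Submodule ℂ M) (Dx Dy : M →ₗ[ℂ] M)
    (hDx0 : ∀ m ∈ g 0, Dx m = 0) (hDy0 : ∀ m ∈ g 0, Dy m = 0)
    (hDxdeg : ∀ d : ℕ, ∀ m ∈ g (d + 1), Dx m ∈ g d)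
    (hDydeg : ∀ d : ℕ, ∀ m ∈ g (d + 1), Dy m ∈ g d) :
    ∀ (d : ℕ), ∀ m ∈ g d, ∀ i j, d < i + j → (Dx^i) ((Dy^j) m) = 0 := by
  intro d m hm i j hij
  rcases le_or_gt j d with h | h
  · have h1 : (Dy^j) m ∈ g (d - j) := powMem g Dy hDydeg j (d-j) m (by rwa [Nat.sub_add_cancel h])
    exact powEqZero g Dx hDxdeg hDx0 i (d-j) (by omega) _ h1
  · rw [powEqZero g Dy hDydeg hDy0 j d h m hm, map_zero]

lemma TT_ker_y (Dx Dy : M →ₗ[ℂ] M)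
    (hLy : ∀ (f : P2) (m : M), Dy (f • m) = (pderiv 1 f) • m + f • Dy m)
    (hcm : ∀ (i : ℕ) (w : M), Dy ((Dx^i) w) = (Dx^i) (Dy w))
    (N : ℕ) (m : M) (hnil : ∀ i, (Dx^i) ((Dy^N) m) = 0) :
    Dy (TT Dx Dy N m) = 0 := by
  rw [TT_apply, map_sum]
  simp only [map_sum]
  refine Finset.sum_eq_zero (fun i hi => ?_)
  set v : ℕ → M := fun j => ((-1:ℂ)^(i+j)/(i.factorial * j.factorial)) •
      ((X 0^i * X 1^j : P2) • ((Dx^i) ((Dy^(j+1)) m))) with hv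
  set f : ℕ → M := fun j => match j with | 0 => 0 | (k+1) => v k with hf
  have hpow : ∀ j, Dy ((Dx^i) ((Dy^j) m)) = (Dx^i) ((Dy^(j+1)) m) := by
    intro j; rw [hcm, pow_succ', Module.End.mul_apply]
  have hstep : ∀ j, Dy (((-1:ℂ)^(i+j) / (i.factorial * j.factorial)) •
      ((X 0 ^ i * X 1 ^ j : P2) • ((Dx^i) ((Dy^j) m)))) = f (j+1) - f j := by
    intro j
    rw [map_smul, hLy, smul_add]
    cases j with
    | zero =>
      show _ = v 0 - 0
      rw [pderiv1_pow0, zero_smul, smul_zero, zero_add, sub_zero, hv]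
      simp only []
      rw [hpow]
    | succ j =>
      show _ = v (j+1) - v j
      rw [pderiv1_pow, nat_mul_smul, smul_smul, coefstep', hpow, sub_eq_neg_add, hv]
      simp [neg_smul]
  calc ∑ j ∈ range N, Dy (((-1:ℂ)^(i+j) / (i.factorial * j.factorial)) •
        ((X 0 ^ i * X 1 ^ j : P2) • ((Dx^i) ((Dy^j) m))))
      = ∑ j ∈ range N, (f (j+1) - f j) := Finset.sum_congr rfl (fun j _ => hstep j)
    _ = f N - f 0 := Finset.sum_range_sub f N
    _ = 0 := by
        cases N with
        | zero => simp
        | succ N => show v N - 0 = 0; rw [hv]; simp [hnil]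

lemma monoMem (g : ℕ → Submodule ℂ M)
    (hgx : ∀ d : ℕ, ∀ m ∈ g d, (X 0 : P2) • m ∈ g (d + 1))
    (hgy : ∀ d : ℕ, ∀ m ∈ g d, (X 1 : P2) • m ∈ g (d + 1)) :
    ∀ (a b d : ℕ), ∀ m ∈ g d, ((X 0:P2)^a * X 1^b) • m ∈ g (d + b + a) := by
  have hx : ∀ (a d : ℕ), ∀ m ∈ g d, ((X 0:P2)^a) • m ∈ g (d + a) := by
    intro a
    induction a with
    | zero => intro d m hm; simpa using hm
    | succ a ih =>
      intro d m hm
      have : ((X 0:P2)^(a+1)) • m = (X 0:P2) • (((X 0:P2)^a) • m) := by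
        rw [← mul_smul, pow_succ']
      rw [this, ← Nat.add_assoc]
      exact hgx _ _ (ih d m hm)
  have hy : ∀ (b d : ℕ), ∀ m ∈ g d, ((X 1:P2)^b) • m ∈ g (d + b) := by
    intro b
    induction b with
    | zero => intro d m hm; simpa using hm
    | succ b ih =>
      intro d m hm
      have : ((X 1:P2)^(b+1)) • m = (X 1:P2) • (((X 1:P2)^b) • m) := by
        rw [← mul_smul, pow_succ']
      rw [this, ← Nat.add_assoc]
      exact hgy _ _ (ih d m hm)
  intro a b d m hm
  rw [mul_smul]
  exact hx a _ _ (hy b d m hm)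

lemma pderiv1_gen (a c : ℕ) : pderiv (1 : Fin 2) ((X 0:P2)^a * X 1^c) = ((c : ℕ) : P2) * (X 0^a * X 1^(c-1)) := by
  cases c with
  | zero => rw [pderiv1_pow0]; simp
  | succ c => rw [pderiv1_pow]; simp

lemma pderiv0_gen (a c : ℕ) : pderiv (0 : Fin 2) ((X 0:P2)^a * X 1^c) = ((a : ℕ) : P2) * (X 0^(a-1) * X 1^c) := by
  cases a with
  | zero => rw [pderiv0_pow0]; simp
  | succ a => rw [pderiv0_pow]; simp

lemma dyPow (Dy : M →ₗ[ℂ] M)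
    (hLy : ∀ (f : P2) (m : M), Dy (f • m) = (pderiv 1 f) • m + f • Dy m)
    (mb : M) (hmb : Dy mb = 0) :
    ∀ (j a b : ℕ), (Dy^j) (((X 0:P2)^a * X 1^b) • mb) =
      ((b.descFactorial j : ℕ) : ℂ) • (((X 0:P2)^a * X 1^(b-j)) • mb) := by
  intro j
  induction j with
  | zero => intro a b; simp
  | succ j ih =>
    intro a b
    rw [pow_succ, Module.End.mul_apply, hLy, hmb, smul_zero, add_zero,
      pderiv1_gen, nat_mul_smul, map_smul, ih, smul_smul]
    have e1 : b - 1 - j = b - (j+1) := by omega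
    have e2 : b * (b-1).descFactorial j = b.descFactorial (j+1) := by
      cases b with
      | zero => simp
      | succ b => rw [Nat.succ_descFactorial_succ]; simp
    rw [e1, ← e2]
    push_cast
    ring_nf

lemma dxPow (Dx : M →ₗ[ℂ] M)
    (hLx : ∀ (f : P2) (m : M), Dx (f • m) = (pderiv 0 f) • m + f • Dx m)
    (mb : M) (hmb : Dx mb = 0) :
    ∀ (i a b : ℕ), (Dx^i) (((X 0:P2)^a * X 1^b) • mb) =
      ((a.descFactorial i : ℕ) : ℂ) • (((X 0:P2)^(a-i) * X 1^b) • mb) := by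
  intro i
  induction i with
  | zero => intro a b; simp
  | succ i ih =>
    intro a b
    rw [pow_succ, Module.End.mul_apply, hLx, hmb, smul_zero, add_zero,
      pderiv0_gen, nat_mul_smul, map_smul, ih, smul_smul]
    have e1 : a - 1 - i = a - (i+1) := by omega
    have e2 : a * (a-1).descFactorial i = a.descFactorial (i+1) := by
      cases a with
      | zero => simp
      | succ a => rw [Nat.succ_descFactorial_succ]; simp
    rw [e1, ← e2]
    push_cast
    ring_nf

lemma ddPow (Dx Dy : M →ₗ[ℂ] M)
    (hLx : ∀ (f : P2) (m : M), Dx (f • m) = (pderiv 0 f) • m + f • Dx m)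
    (hLy : ∀ (f : P2) (m : M), Dy (f • m) = (pderiv 1 f) • m + f • Dy m)
    (mb : M) (hx : Dx mb = 0) (hy : Dy mb = 0) (i j a b : ℕ) :
    (Dx^i) ((Dy^j) (((X 0:P2)^a * X 1^b) • mb)) =
      ((a.descFactorial i * b.descFactorial j : ℕ) : ℂ) • (((X 0:P2)^(a-i) * X 1^(b-j)) • mb) := by
  rw [dyPow Dy hLy mb hy, map_smul, dxPow Dx hLx mb hx, smul_smul]
  push_cast
  ring_nf

lemma altSum (c N : ℕ) (h : c < N) :
    ∑ p ∈ range N, ((-1:ℂ)^p * (c.choose p)) = if c = 0 then 1 else 0 := by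
  have h1 : ∑ p ∈ range N, ((-1:ℂ)^p * (c.choose p)) = ∑ p ∈ range (c+1), ((-1:ℂ)^p * (c.choose p)) := by
    symm
    apply Finset.sum_subset
    · intro x hx; simp only [Finset.mem_range] at *; omega
    · intro x hx hnx
      simp only [Finset.mem_range] at hx hnx
      rw [Nat.choose_eq_zero_of_lt (by omega)]
      simp
  rw [h1]
  have h2 := Int.alternating_sum_range_choose (n := c)
  have h4 : ∑ p ∈ range (c+1), ((-1:ℂ)^p * (c.choose p)) = (((∑ i ∈ range (c+1), ((-1:ℤ)^i * (c.choose i))):ℤ):ℂ) := by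
    push_cast; rfl
  rw [h4, h2]
  split_ifs <;> simp

lemma TT_mono (Dx Dy : M →ₗ[ℂ] M)
    (hLx : ∀ (f : P2) (m : M), Dx (f • m) = (pderiv 0 f) • m + f • Dx m)
    (hLy : ∀ (f : P2) (m : M), Dy (f • m) = (pderiv 1 f) • m + f • Dy m)
    (N c d : ℕ) (hc : c < N) (hd : d < N) (mb : M) (hx : Dx mb = 0) (hy : Dy mb = 0) :
    TT Dx Dy N (((X 0:P2)^c * X 1^d) • mb) =
      if c = 0 ∧ d = 0 then ((X 0:P2)^c * X 1^d) • mb else 0 := by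
  rw [TT_apply]
  have hterm : ∀ p q : ℕ, ((-1:ℂ)^(p+q) / (p.factorial * q.factorial)) •
      ((X 0^p * X 1^q : P2) • ((Dx^p) ((Dy^q) (((X 0:P2)^c * X 1^d) • mb)))) =
      (((-1:ℂ)^p * c.choose p) * ((-1:ℂ)^q * d.choose q)) • (((X 0:P2)^c * X 1^d) • mb) := by
    intro p q
    rw [ddPow Dx Dy hLx hLy mb hx hy]
    rcases le_or_gt p c with hp | hp
    · rcases le_or_gt q d with hq | hq
      · have hx0 : (X 0:P2)^p * X 1^q * ((X 0:P2)^(c-p) * X 1^(d-q)) = X 0^c * X 1^d := by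
          rw [mul_mul_mul_comm, ← pow_add, ← pow_add, Nat.add_sub_cancel' hp, Nat.add_sub_cancel' hq]
        rw [smul_comm ((X 0:P2)^p * X 1^q) _ _, smul_smul ((X 0:P2)^p * X 1^q), hx0, smul_smul]
        congr 1
        rw [Nat.descFactorial_eq_factorial_mul_choose, Nat.descFactorial_eq_factorial_mul_choose]
        have f1 : ((p.factorial :ℂ)) ≠ 0 := Nat.cast_ne_zero.mpr (Nat.factorial_ne_zero _)
        have f2 : ((q.factorial :ℂ)) ≠ 0 := Nat.cast_ne_zero.mpr (Nat.factorial_ne_zero _)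
        push_cast
        field_simp
        ring
      · rw [Nat.choose_eq_zero_of_lt hq, (Nat.descFactorial_eq_zero_iff_lt).mpr hq]
        simp
    · rw [Nat.choose_eq_zero_of_lt hp, (Nat.descFactorial_eq_zero_iff_lt).mpr hp]
      simp
  rw [Finset.sum_congr rfl (fun p _ => Finset.sum_congr rfl (fun q _ => hterm p q))]
  have hfac : ∑ p ∈ range N, ∑ q ∈ range N,
      ((((-1:ℂ)^p * c.choose p) * ((-1:ℂ)^q * d.choose q)) • (((X 0:P2)^c * X 1^d) • mb)) =
      ((∑ p ∈ range N, ((-1:ℂ)^p * c.choose p)) * (∑ q ∈ range N, ((-1:ℂ)^q * d.choose q))) •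
        (((X 0:P2)^c * X 1^d) • mb) := by
    rw [Finset.sum_mul_sum]
    simp only [Finset.sum_smul]
  rw [hfac, altSum c N hc, altSum d N hd]
  split_ifs with h1 h2 h3 <;> simp_all

variable (g : ℕ → Submodule ℂ M) (Dx Dy : M →ₗ[ℂ] M)

/-- `TT` of derivatives of a homogeneous element is in `M̄`. -/
lemma TTbarMem
    (hDx0 : ∀ m ∈ g 0, Dx m = 0) (hDy0 : ∀ m ∈ g 0, Dy m = 0)
    (hDxdeg : ∀ d : ℕ, ∀ m ∈ g (d + 1), Dx m ∈ g d)
    (hDydeg : ∀ d : ℕ, ∀ m ∈ g (d + 1), Dy m ∈ g d)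
    (hcm : ∀ (i : ℕ) (w : M), Dy ((Dx^i) w) = (Dx^i) (Dy w))
    (hLx : ∀ (f : P2) (m : M), Dx (f • m) = (pderiv 0 f) • m + f • Dx m)
    (hLy : ∀ (f : P2) (m : M), Dy (f • m) = (pderiv 1 f) • m + f • Dy m)
    (d N : ℕ) (hdN : d < N) (m : M) (hm : m ∈ g d) :
    TT Dx Dy N m ∈ LinearMap.ker Dx ⊓ LinearMap.ker Dy := by
  rw [Submodule.mem_inf]
  constructor
  · rw [LinearMap.mem_ker]
    exact TT_ker_x Dx Dy hLx N m
      (fun j => nilDD g Dx Dy hDx0 hDy0 hDxdeg hDydeg d m hm N j (by omega))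
  · rw [LinearMap.mem_ker]
    exact TT_ker_y Dx Dy hLy hcm N m
      (fun i => by rw [powEqZero g Dy hDydeg hDy0 N d hdN m hm, map_zero])

noncomputable def FF
    (h : ∀ (d i j : ℕ) (v : ↥(g d)), TT Dx Dy (d+1) ((Dx^i) ((Dy^j) (v:M))) ∈
      LinearMap.ker Dx ⊓ LinearMap.ker Dy)
    (d : ℕ) : ↥(g d) →ₗ[ℂ] P2 ⊗[ℂ] ↥(LinearMap.ker Dx ⊓ LinearMap.ker Dy) :=
  ∑ i ∈ range (d+1), ∑ j ∈ range (d+1),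
    (TensorProduct.mk ℂ P2 ↥(LinearMap.ker Dx ⊓ LinearMap.ker Dy) (X 0^i * X 1^j)).comp
      (LinearMap.codRestrict (LinearMap.ker Dx ⊓ LinearMap.ker Dy)
        (((1:ℂ)/(i.factorial * j.factorial)) •
          ((TT Dx Dy (d+1)) ∘ₗ (((Dx^i : M →ₗ[ℂ] M) ∘ₗ (Dy^j : M →ₗ[ℂ] M)).comp (g d).subtype)))
        (fun v => Submodule.smul_mem _ _ (h d i j v)))

lemma FF_apply (h) (d : ℕ) (v : ↥(g d)) :
    FF g Dx Dy h d v = ∑ i ∈ range (d+1), ∑ j ∈ range (d+1),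
      (X 0^i * X 1^j : P2) ⊗ₜ[ℂ]
        (((1:ℂ)/(i.factorial * j.factorial)) •
          (⟨TT Dx Dy (d+1) ((Dx^i) ((Dy^j) (v:M))), h d i j v⟩ :
            ↥(LinearMap.ker Dx ⊓ LinearMap.ker Dy))) := by
  rw [FF, LinearMap.sum_apply]
  refine Finset.sum_congr rfl (fun i _ => ?_)
  rw [LinearMap.sum_apply]
  refine Finset.sum_congr rfl (fun j _ => ?_)
  rfl

noncomputable def SS (hg : DirectSum.IsInternal g)
    (h : ∀ (d i j : ℕ) (v : ↥(g d)), TT Dx Dy (d+1) ((Dx^i) ((Dy^j) (v:M))) ∈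
      LinearMap.ker Dx ⊓ LinearMap.ker Dy) :
    M →ₗ[ℂ] P2 ⊗[ℂ] ↥(LinearMap.ker Dx ⊓ LinearMap.ker Dy) :=
  (DirectSum.toModule ℂ ℕ _ (FF g Dx Dy h)).comp
    (LinearEquiv.ofBijective (DirectSum.coeLinearMap g) hg).symm.toLinearMap

lemma SS_apply (hg : DirectSum.IsInternal g) (h) (d : ℕ) (m : M) (hm : m ∈ g d) :
    SS g Dx Dy hg h m = FF g Dx Dy h d ⟨m, hm⟩ := by
  have h1 : (LinearEquiv.ofBijective (DirectSum.coeLinearMap g) hg).symm m =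
      DirectSum.lof ℂ ℕ (fun i => ↥(g i)) d ⟨m, hm⟩ := by
    rw [LinearEquiv.symm_apply_eq]
    show m = DirectSum.coeLinearMap g _
    rw [DirectSum.lof_eq_of, DirectSum.coeLinearMap_of]
  rw [SS, LinearMap.comp_apply, LinearEquiv.coe_toLinearMap, h1, DirectSum.toModule_lof]

lemma barComponents (hg : DirectSum.IsInternal g)
    (hDx0 : ∀ m ∈ g 0, Dx m = 0) (hDy0 : ∀ m ∈ g 0, Dy m = 0)
    (hDxdeg : ∀ d : ℕ, ∀ m ∈ g (d + 1), Dx m ∈ g d)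
    (hDydeg : ∀ d : ℕ, ∀ m ∈ g (d + 1), Dy m ∈ g d)
    (m : M) (hm : m ∈ LinearMap.ker Dx ⊓ LinearMap.ker Dy) :
    m ∈ ⨆ e, ((LinearMap.ker Dx ⊓ LinearMap.ker Dy) ⊓ g e) := by
  classical
  set E := LinearEquiv.ofBijective (DirectSum.coeLinearMap g) hg with hE
  set x := E.symm m with hxdef
  have hsum : m = ∑ i ∈ x.support, ((x i : M)) := by
    conv_lhs => rw [← E.apply_symm_apply m, ← hxdef,
      ← DirectSum.sum_support_of x]
    rw [map_sum]
    refine Finset.sum_congr rfl (fun i _ => ?_)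
    show DirectSum.coeLinearMap g _ = _
    rw [DirectSum.coeLinearMap_of]
  have hker : ∀ (D : M →ₗ[ℂ] M), (∀ m ∈ g 0, D m = 0) →
      (∀ d : ℕ, ∀ m ∈ g (d+1), D m ∈ g d) → D m = 0 → ∀ i, D ((x i : M)) = 0 := by
    intro D h0 hdeg hDm i
    cases i with
    | zero => exact h0 _ (x 0).2
    | succ d =>
      by_cases hs : d + 1 ∈ x.support
      · have h2 : ∑ i ∈ x.support, D ((x i : M)) = 0 := by rw [← map_sum, ← hsum, hDm]
        have h5 : ∑ i ∈ x.support, (E.symm (D ((x i : M)))) d = 0 := by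
          have : ∑ i ∈ x.support, (E.symm (D ((x i : M)))) d =
              (∑ i ∈ x.support, E.symm (D ((x i : M)))) d := by
            rw [DFinsupp.finset_sum_apply]
          rw [this, ← map_sum, h2, map_zero]
          rfl
        have h6 : ∑ i ∈ x.support, (E.symm (D ((x i : M)))) d =
            (E.symm (D ((x (d+1) : M)))) d := by
          apply Finset.sum_eq_single_of_mem (d+1) hs
          intro i _ hne
          cases i with
          | zero => rw [h0 _ (x 0).2, map_zero]; rfl
          | succ e =>
            exact hg.ofBijective_coeLinearMap_of_mem_ne
              (by omega : e ≠ d) (hdeg e _ (x (e+1)).2)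
        have h7 : (E.symm (D ((x (d+1) : M)))) d =
            ⟨D ((x (d+1) : M)), hdeg d _ (x (d+1)).2⟩ :=
          hg.ofBijective_coeLinearMap_of_mem (hdeg d _ (x (d+1)).2)
        have h8 : (⟨D ((x (d+1) : M)), hdeg d _ (x (d+1)).2⟩ : ↥(g d)) = 0 := by
          rw [← h7, ← h6, h5]
        exact congrArg Subtype.val h8
      · have : x (d+1) = 0 := DFinsupp.notMem_support_iff.mp hs
        rw [this]
        simp
  rw [Submodule.mem_inf, LinearMap.mem_ker, LinearMap.mem_ker] at hm
  have hcomp : ∀ i, (x i : M) ∈ (LinearMap.ker Dx ⊓ LinearMap.ker Dy) ⊓ g i := by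
    intro i
    refine ⟨⟨?_, ?_⟩, (x i).2⟩
    · exact LinearMap.mem_ker.mpr (hker Dx hDx0 hDxdeg hm.1 i)
    · exact LinearMap.mem_ker.mpr (hker Dy hDy0 hDydeg hm.2 i)
  rw [hsum]
  exact Submodule.sum_mem _ (fun i _ => Submodule.mem_iSup_of_mem i (hcomp i))

lemma hScore (hg : DirectSum.IsInternal g)
    (h : ∀ (d i j : ℕ) (v : ↥(g d)), TT Dx Dy (d+1) ((Dx^i) ((Dy^j) (v:M))) ∈
      LinearMap.ker Dx ⊓ LinearMap.ker Dy)
    (hgx : ∀ d : ℕ, ∀ m ∈ g d, (X 0 : P2) • m ∈ g (d + 1))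
    (hgy : ∀ d : ℕ, ∀ m ∈ g d, (X 1 : P2) • m ∈ g (d + 1))
    (hLx : ∀ (f : P2) (m : M), Dx (f • m) = (pderiv 0 f) • m + f • Dx m)
    (hLy : ∀ (f : P2) (m : M), Dy (f • m) = (pderiv 1 f) • m + f • Dy m)
    (a b e' : ℕ) (mb : M) (hme : mb ∈ g e') (hx : Dx mb = 0) (hy : Dy mb = 0)
    (hbar : mb ∈ LinearMap.ker Dx ⊓ LinearMap.ker Dy) :
    SS g Dx Dy hg h (((X 0:P2)^a * X 1^b) • mb) =
      ((X 0:P2)^a * X 1^b) ⊗ₜ[ℂ] (⟨mb, hbar⟩ : ↥(LinearMap.ker Dx ⊓ LinearMap.ker Dy)) := by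
  have hw : ((X 0:P2)^a * X 1^b) • mb ∈ g (e' + b + a) := monoMem g hgx hgy a b e' mb hme
  set w : ↥(g (e' + b + a)) := ⟨((X 0:P2)^a * X 1^b) • mb, hw⟩ with hwdef
  have hcoe : (w : M) = ((X 0:P2)^a * X 1^b) • mb := rfl
  rw [SS_apply g Dx Dy hg h (e'+b+a) _ hw, FF_apply]
  have hval : ∀ i j : ℕ,
      TT Dx Dy (e'+b+a+1) ((Dx^i) ((Dy^j) (w : M))) =
      ((a.descFactorial i * b.descFactorial j : ℕ) : ℂ) •
        (if a-i = 0 ∧ b-j = 0 then (((X 0:P2)^(a-i) * X 1^(b-j)) • mb) else 0) := by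
    intro i j
    rw [hcoe, ddPow Dx Dy hLx hLy mb hx hy, map_smul,
      TT_mono Dx Dy hLx hLy (e'+b+a+1) (a-i) (b-j) (by omega) (by omega) mb hx hy]
  have hzero : ∀ i j : ℕ, ¬(i = a ∧ j = b) →
      (((1:ℂ)/(i.factorial * j.factorial)) •
        (⟨TT Dx Dy (e'+b+a+1) ((Dx^i) ((Dy^j) (w : M))), h (e'+b+a) i j w⟩ :
          ↥(LinearMap.ker Dx ⊓ LinearMap.ker Dy))) = 0 := by
    intro i j hne
    apply Subtype.ext
    rw [Submodule.coe_smul]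
    show ((1:ℂ)/(i.factorial * j.factorial)) • TT Dx Dy (e'+b+a+1) ((Dx^i) ((Dy^j) (w : M))) = 0
    rw [hval i j]
    rcases Nat.lt_or_ge i a with hlt | hge
    · rw [if_neg (by omega)]; simp
    · rcases Nat.lt_or_ge a i with hgt | hge2
      · rw [(Nat.descFactorial_eq_zero_iff_lt).mpr hgt]; simp
      · have hia : i = a := by omega
        rcases Nat.lt_or_ge j b with hltb | hgeb
        · rw [if_neg (by omega)]; simp
        · have hjb : b < j := by omega
          rw [(Nat.descFactorial_eq_zero_iff_lt (n := b)).mpr hjb]; simp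
  rw [Finset.sum_eq_single_of_mem a (Finset.mem_range.mpr (by omega))]
  · rw [Finset.sum_eq_single_of_mem b (Finset.mem_range.mpr (by omega))]
    · have hone : (((1:ℂ)/(a.factorial * b.factorial)) •
          (⟨TT Dx Dy (e'+b+a+1) ((Dx^a) ((Dy^b) (w : M))), h (e'+b+a) a b w⟩ :
            ↥(LinearMap.ker Dx ⊓ LinearMap.ker Dy))) = ⟨mb, hbar⟩ := by
        apply Subtype.ext
        rw [Submodule.coe_smul]
        show ((1:ℂ)/(a.factorial * b.factorial)) • TT Dx Dy (e'+b+a+1) ((Dx^a) ((Dy^b) (w : M))) = mb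
        rw [hval a b]
        rw [if_pos (by omega)]
        have h1 : a - a = 0 := by omega
        have h2 : b - b = 0 := by omega
        rw [h1, h2, Nat.descFactorial_self, Nat.descFactorial_self]
        rw [pow_zero, pow_zero, one_mul, one_smul, smul_smul]
        have hne : ((a.factorial * b.factorial : ℕ) : ℂ) ≠ 0 :=
          Nat.cast_ne_zero.mpr (Nat.mul_ne_zero (Nat.factorial_ne_zero _) (Nat.factorial_ne_zero _))
        rw [one_div]
        push_cast at hne ⊢
        rw [inv_mul_cancel₀ hne, one_smul]
      rw [hone]
    · intro j _ hne
      rw [hzero a j (by tauto), tmul_zero]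
  · intro i _ hne
    apply Finset.sum_eq_zero
    intro j _
    rw [hzero i j (by tauto), tmul_zero]

section
variable {M : Type} [AddCommGroup M] [Module ℂ M] [Module P2 M] [IsScalarTower ℂ P2 M]
variable (g : ℕ → Submodule ℂ M) (Dx Dy : M →ₗ[ℂ] M)

lemma keyMono (hg : DirectSum.IsInternal g)
    (h : ∀ (d i j : ℕ) (v : ↥(g d)), TT Dx Dy (d+1) ((Dx^i) ((Dy^j) (v:M))) ∈
      LinearMap.ker Dx ⊓ LinearMap.ker Dy)
    (hgx : ∀ d : ℕ, ∀ m ∈ g d, (X 0 : P2) • m ∈ g (d + 1))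
    (hgy : ∀ d : ℕ, ∀ m ∈ g d, (X 1 : P2) • m ∈ g (d + 1))
    (hDx0 : ∀ m ∈ g 0, Dx m = 0) (hDy0 : ∀ m ∈ g 0, Dy m = 0)
    (hDxdeg : ∀ d : ℕ, ∀ m ∈ g (d + 1), Dx m ∈ g d)
    (hDydeg : ∀ d : ℕ, ∀ m ∈ g (d + 1), Dy m ∈ g d)
    (hLx : ∀ (f : P2) (m : M), Dx (f • m) = (pderiv 0 f) • m + f • Dx m)
    (hLy : ∀ (f : P2) (m : M), Dy (f • m) = (pderiv 1 f) • m + f • Dy m)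
    (a b : ℕ) (mb : ↥(LinearMap.ker Dx ⊓ LinearMap.ker Dy)) :
    SS g Dx Dy hg h (((X 0:P2)^a * X 1^b) • (mb:M)) = ((X 0:P2)^a * X 1^b) ⊗ₜ[ℂ] mb := by
  have h1 := barComponents g Dx Dy hg hDx0 hDy0 hDxdeg hDydeg (mb:M) mb.2
  have h2 : (((mb:M) ∈ LinearMap.ker Dx ⊓ LinearMap.ker Dy) ∧
      ∀ hm : (mb:M) ∈ LinearMap.ker Dx ⊓ LinearMap.ker Dy,
        SS g Dx Dy hg h (((X 0:P2)^a * X 1^b) • (mb:M)) =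
          ((X 0:P2)^a * X 1^b) ⊗ₜ[ℂ]
            (⟨(mb:M), hm⟩ : ↥(LinearMap.ker Dx ⊓ LinearMap.ker Dy))) := by
    refine Submodule.iSup_induction
      (motive := fun m => (m ∈ LinearMap.ker Dx ⊓ LinearMap.ker Dy) ∧
        ∀ hm : m ∈ LinearMap.ker Dx ⊓ LinearMap.ker Dy,
          SS g Dx Dy hg h (((X 0:P2)^a * X 1^b) • m) =
            ((X 0:P2)^a * X 1^b) ⊗ₜ[ℂ]
              (⟨m, hm⟩ : ↥(LinearMap.ker Dx ⊓ LinearMap.ker Dy)))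
      _ h1 ?_ ?_ ?_
    · intro e p hp
      refine ⟨hp.1, fun hm => ?_⟩
      have hpx : Dx p = 0 := LinearMap.mem_ker.mp (Submodule.mem_inf.mp hp.1).1
      have hpy : Dy p = 0 := LinearMap.mem_ker.mp (Submodule.mem_inf.mp hp.1).2
      exact hScore g Dx Dy hg h hgx hgy hLx hLy a b e p hp.2 hpx hpy hm
    · refine ⟨zero_mem _, fun hm => ?_⟩
      rw [smul_zero, map_zero]
      have : (⟨(0:M), hm⟩ : ↥(LinearMap.ker Dx ⊓ LinearMap.ker Dy)) = 0 := Subtype.ext rfl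
      rw [this, tmul_zero]
    · intro u v hu hv
      refine ⟨add_mem hu.1 hv.1, fun hm => ?_⟩
      rw [smul_add, map_add, hu.2 hu.1, hv.2 hv.1, ← tmul_add]
      congr 1
  exact (h2.2 mb.2).trans (by congr 1)

lemma keyAll (hg : DirectSum.IsInternal g)
    (h : ∀ (d i j : ℕ) (v : ↥(g d)), TT Dx Dy (d+1) ((Dx^i) ((Dy^j) (v:M))) ∈
      LinearMap.ker Dx ⊓ LinearMap.ker Dy)
    (hgx : ∀ d : ℕ, ∀ m ∈ g d, (X 0 : P2) • m ∈ g (d + 1))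
    (hgy : ∀ d : ℕ, ∀ m ∈ g d, (X 1 : P2) • m ∈ g (d + 1))
    (hDx0 : ∀ m ∈ g 0, Dx m = 0) (hDy0 : ∀ m ∈ g 0, Dy m = 0)
    (hDxdeg : ∀ d : ℕ, ∀ m ∈ g (d + 1), Dx m ∈ g d)
    (hDydeg : ∀ d : ℕ, ∀ m ∈ g (d + 1), Dy m ∈ g d)
    (hLx : ∀ (f : P2) (m : M), Dx (f • m) = (pderiv 0 f) • m + f • Dx m)
    (hLy : ∀ (f : P2) (m : M), Dy (f • m) = (pderiv 1 f) • m + f • Dy m)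
    (f : P2) (mb : ↥(LinearMap.ker Dx ⊓ LinearMap.ker Dy)) :
    SS g Dx Dy hg h (f • (mb:M)) = f ⊗ₜ[ℂ] mb := by
  induction f using MvPolynomial.induction_on' with
  | monomial u c =>
    have hmon : (monomial u c : P2) = C c * ((X 0:P2)^(u 0) * X 1^(u 1)) := by
      rw [monomial_eq]
      congr 1
      rw [Finsupp.prod_fintype _ _ (fun i => pow_zero _), Fin.prod_univ_two]
    rw [hmon, mul_smul, ← MvPolynomial.algebraMap_eq, algebraMap_smul, map_smul,
      keyMono g Dx Dy hg h hgx hgy hDx0 hDy0 hDxdeg hDydeg hLx hLy, smul_tmul']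
    rw [Algebra.smul_def]
  | add p q hp hq => rw [add_smul, map_add, hp, hq, add_tmul]
end


theorem stmt11 (M : Type) [AddCommGroup M] [Module ℂ M] [Module P2 M]
    [IsScalarTower ℂ P2 M] [Module.Finite P2 M]
    -- an ℕ-grading `M = ⊕_d M_d` by ℂ-subspaces…
    (g : ℕ → Submodule ℂ M) (hg : DirectSum.IsInternal g)
    -- …for which multiplication by `x` and `y` has degree 1
    (hgx : ∀ d : ℕ, ∀ m ∈ g d, (X 0 : P2) • m ∈ g (d + 1))
    (hgy : ∀ d : ℕ, ∀ m ∈ g d, (X 1 : P2) • m ∈ g (d + 1))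
    (Dx Dy : M →ₗ[ℂ] M)
    -- `D_x`, `D_y` have degree −1
    (hDx0 : ∀ m ∈ g 0, Dx m = 0) (hDy0 : ∀ m ∈ g 0, Dy m = 0)
    (hDxdeg : ∀ d : ℕ, ∀ m ∈ g (d + 1), Dx m ∈ g d)
    (hDydeg : ∀ d : ℕ, ∀ m ∈ g (d + 1), Dy m ∈ g d)
    -- they commute
    (hcomm : Dx ∘ₗ Dy = Dy ∘ₗ Dx)
    -- and satisfy the Leibniz rules
    (hLx : ∀ (f : P2) (m : M), Dx (f • m) = (pderiv 0 f) • m + f • Dx m)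
    (hLy : ∀ (f : P2) (m : M), Dy (f • m) = (pderiv 1 f) • m + f • Dy m) :
    -- then the multiplication map `ℂ[x,y] ⊗ M̄ → M` is an isomorphism of
    -- `ℂ[x,y]`-modules; in particular `M` is free and `M̄` is finite dimensional
    Function.Bijective (mulMap M (LinearMap.ker Dx ⊓ LinearMap.ker Dy)) ∧
    Module.Free P2 M ∧
    FiniteDimensional ℂ ↥(LinearMap.ker Dx ⊓ LinearMap.ker Dy) := by
  have hcm : ∀ (i : ℕ) (w : M), Dy ((Dx^i) w) = (Dx^i) (Dy w) := by
    intro i w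
    have h1 : Commute Dy Dx := LinearMap.ext (fun m => (LinearMap.ext_iff.mp hcomm m).symm)
    have hC : Dy * Dx ^ i = Dx ^ i * Dy := h1.pow_right i
    calc Dy ((Dx^i) w) = (Dy * Dx^i) w := rfl
    _ = (Dx^i * Dy) w := by rw [hC]
    _ = (Dx^i) (Dy w) := rfl
  have hTbar := TTbarMem g Dx Dy hDx0 hDy0 hDxdeg hDydeg hcm hLx hLy
  have h : ∀ (d i j : ℕ) (v : ↥(g d)), TT Dx Dy (d+1) ((Dx^i) ((Dy^j) (v:M))) ∈
      LinearMap.ker Dx ⊓ LinearMap.ker Dy := by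
    intro d i j v
    rcases le_or_gt (i+j) d with hle | hlt
    · have h1 : (Dy^j) (v:M) ∈ g (d - j) := by
        refine powMem g Dy hDydeg j (d-j) (v:M) ?_
        rw [Nat.sub_add_cancel (by omega)]
        exact v.2
      have h2 : (Dx^i) ((Dy^j) (v:M)) ∈ g (d - (i+j)) := by
        refine powMem g Dx hDxdeg i (d-(i+j)) _ ?_
        rw [show d - (i+j) + i = d - j by omega]
        exact h1
      exact hTbar (d-(i+j)) (d+1) (by omega) _ h2
    · rw [nilDD g Dx Dy hDx0 hDy0 hDxdeg hDydeg d (v:M) v.2 i j hlt, map_zero]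
      exact zero_mem _
  -- surjectivity
  have hsurj : Function.Surjective (mulMap M (LinearMap.ker Dx ⊓ LinearMap.ker Dy)) := by
    have hrange : ∀ d : ℕ, ∀ m ∈ g d,
        m ∈ LinearMap.range (mulMap M (LinearMap.ker Dx ⊓ LinearMap.ker Dy)) := by
      intro d
      induction d using Nat.strong_induction_on with
      | _ d ih =>
        intro m hm
        have hbar : TT Dx Dy (d+1) m ∈ LinearMap.ker Dx ⊓ LinearMap.ker Dy :=
          hTbar d (d+1) (by omega) m hm
        have hTm : TT Dx Dy (d+1) m ∈
            LinearMap.range (mulMap M (LinearMap.ker Dx ⊓ LinearMap.ker Dy)) := by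
          refine ⟨(1:P2) ⊗ₜ ⟨_, hbar⟩, ?_⟩
          rw [mulMap, LinearMap.liftBaseChange_tmul, one_smul]
          rfl
        have hmem : ∀ p : ℕ × ℕ, p ≠ ((0:ℕ),(0:ℕ)) →
            ((-1:ℂ)^(p.1+p.2)/(p.1.factorial * p.2.factorial)) •
              ((X 0^p.1 * X 1^p.2 : P2) • ((Dx ^ p.1) ((Dy ^ p.2) m))) ∈
            LinearMap.range (mulMap M (LinearMap.ker Dx ⊓ LinearMap.ker Dy)) := by
          intro p hp
          have hp' : ¬(p.1 = 0 ∧ p.2 = 0) := by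
            intro hc; exact hp (Prod.ext hc.1 hc.2)
          rcases le_or_gt (p.1+p.2) d with hle | hlt
          · have h1 : (Dy^p.2) m ∈ g (d - p.2) := by
              refine powMem g Dy hDydeg p.2 (d-p.2) m ?_
              rw [Nat.sub_add_cancel (by omega)]
              exact hm
            have h2 : (Dx^p.1) ((Dy^p.2) m) ∈ g (d - (p.1+p.2)) := by
              refine powMem g Dx hDxdeg p.1 (d-(p.1+p.2)) _ ?_
              rw [show d - (p.1+p.2) + p.1 = d - p.2 by omega]
              exact h1
            have h3 := ih (d - (p.1+p.2)) (by omega) _ h2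
            rw [← algebraMap_smul P2 ((-1:ℂ)^(p.1+p.2)/(p.1.factorial * p.2.factorial))]
            exact Submodule.smul_mem _ _ (Submodule.smul_mem _ _ h3)
          · rw [nilDD g Dx Dy hDx0 hDy0 hDxdeg hDydeg d m hm p.1 p.2 hlt,
              smul_zero, smul_zero]
            exact zero_mem _
        have hTT := TT_apply Dx Dy (d+1) m
        rw [← Finset.sum_product'] at hTT
        have h00 : ((0:ℕ),(0:ℕ)) ∈ Finset.range (d+1) ×ˢ Finset.range (d+1) := by simp
        rw [← Finset.add_sum_erase _ _ h00] at hTT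
        have hrepr : m = TT Dx Dy (d+1) m -
            ∑ p ∈ (Finset.range (d+1) ×ˢ Finset.range (d+1)).erase ((0:ℕ),(0:ℕ)),
              ((-1:ℂ)^(p.1+p.2)/(p.1.factorial * p.2.factorial)) •
                ((X 0 ^ p.1 * X 1 ^ p.2 : P2) • ((Dx ^ p.1) ((Dy ^ p.2) m))) := by
          rw [hTT]
          simp
        rw [hrepr]
        exact sub_mem hTm (Submodule.sum_mem _
          (fun p hp => hmem p (Finset.ne_of_mem_erase hp)))
    intro m
    have hmem : m ∈ ⨆ d, g d := by
      rw [hg.submodule_iSup_eq_top]; trivial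
    have : m ∈ LinearMap.range (mulMap M (LinearMap.ker Dx ⊓ LinearMap.ker Dy)) := by
      refine Submodule.iSup_induction
        (motive := fun z => z ∈ LinearMap.range (mulMap M (LinearMap.ker Dx ⊓ LinearMap.ker Dy)))
        g hmem ?_ ?_ ?_
      · exact fun d m hm => hrange d m hm
      · exact zero_mem _
      · exact fun x y hx hy => add_mem hx hy
    exact this
  -- injectivity
  have hinj : Function.Injective (mulMap M (LinearMap.ker Dx ⊓ LinearMap.ker Dy)) := by
    have hid : ((SS g Dx Dy hg h).comp
        ((mulMap M (LinearMap.ker Dx ⊓ LinearMap.ker Dy)).restrictScalars ℂ)) =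
        LinearMap.id := by
      apply TensorProduct.ext'
      intro f mb
      rw [LinearMap.comp_apply, LinearMap.restrictScalars_apply]
      have hmul : (mulMap M (LinearMap.ker Dx ⊓ LinearMap.ker Dy)) (f ⊗ₜ mb) = f • (mb:M) := by
        rw [mulMap, LinearMap.liftBaseChange_tmul]
        rfl
      rw [hmul, keyAll g Dx Dy hg h hgx hgy hDx0 hDy0 hDxdeg hDydeg hLx hLy]
      rfl
    intro t1 t2 ht
    have e1 := LinearMap.ext_iff.mp hid t1
    have e2 := LinearMap.ext_iff.mp hid t2
    rw [LinearMap.comp_apply, LinearMap.restrictScalars_apply, LinearMap.id_apply] at e1 e2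
    rw [← e1, ← e2, ht]
  have hbij : Function.Bijective (mulMap M (LinearMap.ker Dx ⊓ LinearMap.ker Dy)) := ⟨hinj, hsurj⟩
  refine ⟨hbij, ?_, ?_⟩
  · exact Module.Free.of_equiv (LinearEquiv.ofBijective _ hbij)
  · let eqv := LinearEquiv.ofBijective _ hbij
    have hfin : Module.Finite P2 (P2 ⊗[ℂ] ↥(LinearMap.ker Dx ⊓ LinearMap.ker Dy)) :=
      Module.Finite.equiv eqv.symm
    let bV := Module.Basis.ofVectorSpace ℂ ↥(LinearMap.ker Dx ⊓ LinearMap.ker Dy)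
    have hfinidx : Finite (Module.Basis.ofVectorSpaceIndex ℂ ↥(LinearMap.ker Dx ⊓ LinearMap.ker Dy)) :=
      Module.Finite.finite_basis (bV.baseChange P2)
    exact Module.Finite.of_basis bV
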